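/- For all integers m and e, the tetrahedral index satisfies the three-term recurrence in the second variable: I_Δ(m, e+1) + (u^{2e+m} - u^{-m} - u^{m}) · I_Δ(m,e) + I_Δ(m, e-1) = 0, where u plays the role of q^{1/2} (so u^{2e+m} = q^{e+m/2}, u^{±m} = q^{±m/2}). -/

import Mathlib

open scoped BigOperators

/-- Finite q-Pochhammer symbol `(a;q)_n = ∏_{i=0}^{n-1} (1 - a q^i)`. -/
noncomputable def qPoch (a q : ℂ) (n : ℕ) : ℂ :=
  ∏ i ∈ Finset.range n, (1 - a * q ^ i)

/-- Infinite q-Pochhammer symbol `(a;q)_∞ = ∏_{i=0}^{∞} (1 - a q^i)`. -/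
noncomputable def qPochInf (a q : ℂ) : ℂ :=
  ∏' i : ℕ, (1 - a * q ^ i)

/-- The `n`-th term of the series defining the tetrahedral index `I_Δ(m,e)`,
with `q = u^2` and vanishing below `e₊ = max(-e,0)`. -/
noncomputable def tetTerm (u : ℂ) (m e : ℤ) (n : ℕ) : ℂ :=
  if (-e).toNat ≤ n then
    (-1 : ℂ) ^ n * u ^ ((n : ℤ) * ((n : ℤ) + 1) - (2 * (n : ℤ) + e) * m) /
      (qPoch (u ^ 2) (u ^ 2) n * qPoch (u ^ 2) (u ^ 2) ((n : ℤ) + e).toNat)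
  else 0

/-- The tetrahedral index `I_Δ(m,e) = Σ_{n=e₊}^∞ (-1)^n u^{n(n+1)-(2n+e)m}/((q;q)_n (q;q)_{n+e})`. -/
noncomputable def tetIndex (u : ℂ) (m e : ℤ) : ℂ := ∑' n : ℕ, tetTerm u m e n


lemma qq_norm_lt {u : ℂ} (hu1 : ‖u‖ < 1) : ‖u ^ 2‖ < 1 := by
  rw [norm_pow]
  nlinarith [norm_nonneg u]

lemma qPoch_succ (a q : ℂ) (n : ℕ) :
    qPoch a q (n + 1) = qPoch a q n * (1 - a * q ^ n) := Finset.prod_range_succ _ _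

lemma qPoch_q_succ (q : ℂ) (n : ℕ) :
    qPoch q q (n + 1) = qPoch q q n * (1 - q ^ (n + 1)) := by
  rw [qPoch_succ, pow_succ']

lemma one_sub_pow_succ_ne_zero {q : ℂ} (hq : ‖q‖ < 1) (j : ℕ) :
    (1 : ℂ) - q ^ (j + 1) ≠ 0 := by
  intro h
  have h1 : (q : ℂ) ^ (j + 1) = 1 := by linear_combination -h
  have h2 : ‖q ^ (j + 1)‖ < 1 := by
    rw [norm_pow]
    calc ‖q‖ ^ (j + 1) ≤ ‖q‖ ^ 1 := by
          apply pow_le_pow_of_le_one (norm_nonneg q) hq.le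
          omega
      _ < 1 := by simpa using hq
  rw [h1] at h2
  simp at h2

lemma norm_one_sub_pow_succ_ge {q : ℂ} (hq : ‖q‖ < 1) (j : ℕ) :
    1 - ‖q‖ ≤ ‖(1 : ℂ) - q ^ (j + 1)‖ := by
  have h2 : ‖q ^ (j + 1)‖ ≤ ‖q‖ := by
    rw [norm_pow]
    calc ‖q‖ ^ (j + 1) ≤ ‖q‖ ^ 1 := by
          apply pow_le_pow_of_le_one (norm_nonneg q) hq.le
          omega
      _ = ‖q‖ := pow_one _
  calc 1 - ‖q‖ ≤ 1 - ‖q ^ (j+1)‖ := by linarith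
    _ = ‖(1:ℂ)‖ - ‖q ^ (j+1)‖ := by simp
    _ ≤ ‖(1:ℂ) - q ^ (j+1)‖ := norm_sub_norm_le _ _

lemma qPoch_ne_zero {q : ℂ} (hq : ‖q‖ < 1) (n : ℕ) : qPoch q q n ≠ 0 := by
  induction n with
  | zero => simp [qPoch]
  | succ k ih =>
    rw [qPoch_q_succ]
    exact mul_ne_zero ih (one_sub_pow_succ_ne_zero hq k)

lemma tetTerm_of_nonneg {u : ℂ} {m e : ℤ} {n : ℕ} (h : 0 ≤ (n : ℤ) + e) :
    tetTerm u m e n =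
      (-1 : ℂ) ^ n * u ^ ((n : ℤ) * ((n : ℤ) + 1) - (2 * (n : ℤ) + e) * m) /
        (qPoch (u ^ 2) (u ^ 2) n * qPoch (u ^ 2) (u ^ 2) ((n : ℤ) + e).toNat) := by
  rw [tetTerm, if_pos]
  rw [Int.toNat_le]
  omega

lemma tetTerm_of_neg {u : ℂ} {m e : ℤ} {n : ℕ} (h : (n : ℤ) + e < 0) :
    tetTerm u m e n = 0 := by
  rw [tetTerm, if_neg]
  rw [Int.toNat_le]
  omega

noncomputable def tetS (u : ℂ) (m e : ℤ) (n : ℕ) : ℂ :=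
  u ^ (m + 2 * e) * (1 - (u ^ 2) ^ n) * tetTerm u m e n



/-- shift e → e+1 -/
lemma tet_e_up {u : ℂ} (hu : u ≠ 0) (hu1 : ‖u‖ < 1) (m e : ℤ) (n : ℕ)
    (h : 0 ≤ (n : ℤ) + e) :
    tetTerm u m (e + 1) n * (1 - (u ^ 2) ^ (((n : ℤ) + e).toNat + 1))
      = u ^ (-m) * tetTerm u m e n := by
  obtain ⟨k, hk⟩ : ∃ k : ℕ, (k : ℤ) = (n : ℤ) + e := ⟨((n : ℤ) + e).toNat, by omega⟩
  have hkk : ((n : ℤ) + e).toNat = k := by omega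
  have hk1 : ((n : ℤ) + (e + 1)).toNat = k + 1 := by omega
  have hq : ‖u ^ 2‖ < 1 := qq_norm_lt hu1
  rw [hkk, tetTerm_of_nonneg (by omega : (0:ℤ) ≤ (n : ℤ) + (e+1)),
    tetTerm_of_nonneg h, hkk, hk1, qPoch_q_succ]
  rw [show (n : ℤ) * ((n : ℤ) + 1) - (2 * (n : ℤ) + (e + 1)) * m
      = ((n : ℤ) * ((n : ℤ) + 1) - (2 * (n : ℤ) + e) * m) + (-m) by ring,
    zpow_add₀ hu]
  have h1 := qPoch_ne_zero (q := u ^ 2) hq n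
  have h2 := qPoch_ne_zero (q := u ^ 2) hq k
  have h3 := one_sub_pow_succ_ne_zero hq k
  have h5 : (u : ℂ) ^ m ≠ 0 := zpow_ne_zero m hu
  rw [zpow_neg]
  field_simp [h1, h2, h3, h5]

/-- shift e → e-1 -/
lemma tet_e_down {u : ℂ} (hu : u ≠ 0) (hu1 : ‖u‖ < 1) (m e : ℤ) (n : ℕ)
    (h : 0 ≤ (n : ℤ) + e) :
    tetTerm u m (e - 1) n
      = u ^ m * (1 - (u ^ 2) ^ (((n : ℤ) + e).toNat)) * tetTerm u m e n := by
  obtain ⟨k, hk⟩ : ∃ k : ℕ, (k : ℤ) = (n : ℤ) + e := ⟨((n : ℤ) + e).toNat, by omega⟩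
  have hkk : ((n : ℤ) + e).toNat = k := by omega
  have hq : ‖u ^ 2‖ < 1 := qq_norm_lt hu1
  rw [hkk]
  rcases Nat.eq_zero_or_pos k with hk0 | hkpos
  · rw [tetTerm_of_neg (by omega), hk0]
    simp
  · obtain ⟨j, rfl⟩ : ∃ j, k = j + 1 := ⟨k - 1, by omega⟩
    have hk1 : ((n : ℤ) + (e - 1)).toNat = j := by omega
    rw [tetTerm_of_nonneg (by omega : (0:ℤ) ≤ (n : ℤ) + (e-1)),
      tetTerm_of_nonneg h, hkk, hk1, qPoch_q_succ]
    rw [show (n : ℤ) * ((n : ℤ) + 1) - (2 * (n : ℤ) + (e - 1)) * m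
        = ((n : ℤ) * ((n : ℤ) + 1) - (2 * (n : ℤ) + e) * m) + m by ring,
      zpow_add₀ hu]
    have h1 := qPoch_ne_zero (q := u ^ 2) hq n
    have h2 := qPoch_ne_zero (q := u ^ 2) hq j
    have h3 := one_sub_pow_succ_ne_zero hq j
    have h5 : (u : ℂ) ^ m ≠ 0 := zpow_ne_zero m hu
    field_simp [h1, h2, h3, h5]

/-- shift n → n+1 -/
lemma tet_n_up {u : ℂ} (hu : u ≠ 0) (hu1 : ‖u‖ < 1) (m e : ℤ) (n : ℕ)
    (h : 0 ≤ (n : ℤ) + e) :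
    tetTerm u m e (n + 1) * ((1 - (u ^ 2) ^ (n + 1)) * (1 - (u ^ 2) ^ (((n : ℤ) + e).toNat + 1)))
      = -(u ^ (2 * (n : ℤ) + 2 - 2 * m)) * tetTerm u m e n := by
  obtain ⟨k, hk⟩ : ∃ k : ℕ, (k : ℤ) = (n : ℤ) + e := ⟨((n : ℤ) + e).toNat, by omega⟩
  have hkk : ((n : ℤ) + e).toNat = k := by omega
  have hk1 : (((n + 1 : ℕ) : ℤ) + e).toNat = k + 1 := by omega
  have hq : ‖u ^ 2‖ < 1 := qq_norm_lt hu1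
  rw [hkk, tetTerm_of_nonneg (by push_cast; omega : (0:ℤ) ≤ ((n+1 : ℕ) : ℤ) + e),
    tetTerm_of_nonneg h, hkk, hk1, qPoch_q_succ, qPoch_q_succ]
  rw [show ((n + 1 : ℕ) : ℤ) * (((n + 1 : ℕ) : ℤ) + 1) - (2 * ((n + 1 : ℕ) : ℤ) + e) * m
      = ((n : ℤ) * ((n : ℤ) + 1) - (2 * (n : ℤ) + e) * m) + (2 * (n : ℤ) + 2 - 2 * m) by
        push_cast; ring,
    zpow_add₀ hu, pow_succ]
  have h1 := qPoch_ne_zero (q := u ^ 2) hq n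
  have h2 := qPoch_ne_zero (q := u ^ 2) hq k
  have h3 := one_sub_pow_succ_ne_zero hq k
  have h4 := one_sub_pow_succ_ne_zero hq n
  have h5 : (u : ℂ) ^ (2 * (n:ℤ) + 2 - 2*m) ≠ 0 := zpow_ne_zero _ hu
  field_simp [h1, h2, h3, h4, h5]

lemma czpow_add {u : ℂ} (hu : u ≠ 0) (a b : ℤ) : u ^ (a + b) = u ^ a * u ^ b :=
  zpow_add₀ hu a b

lemma czpow_neg (u : ℂ) (a : ℤ) : u ^ (-a) = (u ^ a)⁻¹ := zpow_neg u a

lemma czpow_one (u : ℂ) : u ^ (1 : ℤ) = u := zpow_one u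

lemma hpow (u : ℂ) (j : ℕ) : ((u ^ 2 : ℂ)) ^ j = u ^ (2 * (j : ℤ)) := by
  rw [← pow_mul, ← zpow_natCast]
  norm_cast

lemma tet_key (u : ℂ) (hu : u ≠ 0) (hu1 : ‖u‖ < 1) (m e : ℤ) (n : ℕ) :
    tetTerm u m (e + 1) n + (u ^ (2 * e + m) - u ^ (-m) - u ^ m) * tetTerm u m e n
      + tetTerm u m (e - 1) n = tetS u m e n - tetS u m e (n + 1) := by
  have hq : ‖u ^ 2‖ < 1 := qq_norm_lt hu1
  have h1 := qPoch_ne_zero (q := u ^ 2) hq n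
  have hm : (u : ℂ) ^ m ≠ 0 := zpow_ne_zero m hu
  rcases lt_trichotomy ((n : ℤ) + e + 1) 0 with hlt | heq | hgt
  · rw [tetS, tetS, tetTerm_of_neg (by omega : ((n:ℤ) + (e+1)) < 0),
      tetTerm_of_neg (by omega : ((n:ℤ) + e) < 0),
      tetTerm_of_neg (by omega : ((n:ℤ) + (e-1)) < 0),
      tetTerm_of_neg (by push_cast; omega : (((n+1:ℕ):ℤ) + e) < 0)]
    ring
  · -- boundary case : e = -n-1
    obtain rfl : e = -(n : ℤ) - 1 := by omega
    have h4 : (1 : ℂ) - (u ^ 2) ^ (n + 1) ≠ 0 := one_sub_pow_succ_ne_zero hq n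
    have hP0 : qPoch (u ^ 2) (u ^ 2) 0 = 1 := by simp [qPoch]
    have ht0 : ((n:ℤ) + (-(n:ℤ)-1+1)).toNat = 0 := by omega
    have ht1 : (((n+1:ℕ):ℤ) + (-(n:ℤ)-1)).toNat = 0 := by omega
    have hS0 : tetS u m (-(n:ℤ)-1) n = 0 := by
      rw [tetS, tetTerm_of_neg (by omega : ((n:ℤ) + (-(n:ℤ)-1)) < 0)]
      ring
    have B1 : tetTerm u m (-(n:ℤ)-1+1) n * qPoch (u ^ 2) (u ^ 2) n
        = (-1 : ℂ) ^ n * (u ^ (m + 2 * (-(n:ℤ)-1)) *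
            u ^ (((n+1:ℕ):ℤ) * (((n+1:ℕ):ℤ) + 1) - (2 * ((n+1:ℕ):ℤ) + (-(n:ℤ)-1)) * m)) := by
      rw [tetTerm_of_nonneg (by omega : (0:ℤ) ≤ (n:ℤ) + (-(n:ℤ)-1+1)), ht0, hP0, mul_one,
        show ((n:ℤ) * ((n:ℤ) + 1) - (2 * (n:ℤ) + (-(n:ℤ)-1+1)) * m)
          = (m + 2 * (-(n:ℤ)-1)) + (((n+1:ℕ):ℤ) * (((n+1:ℕ):ℤ) + 1)
              - (2 * ((n+1:ℕ):ℤ) + (-(n:ℤ)-1)) * m) by push_cast; ring,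
        czpow_add hu, ← mul_assoc]
      exact div_mul_cancel₀ _ h1
    have B3 : tetTerm u m (-(n:ℤ)-1) (n+1)
          * (qPoch (u ^ 2) (u ^ 2) n * (1 - (u ^ 2) ^ (n + 1)))
        = (-1 : ℂ) ^ n * (-1) *
            u ^ (((n+1:ℕ):ℤ) * (((n+1:ℕ):ℤ) + 1) - (2 * ((n+1:ℕ):ℤ) + (-(n:ℤ)-1)) * m) := by
      rw [tetTerm_of_nonneg (by push_cast; omega : (0:ℤ) ≤ ((n+1:ℕ):ℤ) + (-(n:ℤ)-1)), ht1,
        hP0, mul_one, qPoch_q_succ, pow_succ]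
      exact div_mul_cancel₀ _ (mul_ne_zero h1 h4)
    rw [hS0, tetTerm_of_neg (by omega : ((n:ℤ) + (-(n:ℤ)-1)) < 0),
      tetTerm_of_neg (by omega : ((n:ℤ) + (-(n:ℤ)-1-1)) < 0), tetS]
    apply mul_right_cancel₀ (mul_ne_zero h1 h4)
    linear_combination (1 - (u ^ 2) ^ (n + 1)) * B1
      + u ^ (m + 2 * (-(n:ℤ)-1)) * (1 - (u ^ 2) ^ (n + 1)) * B3
  · -- main case
    have h : 0 ≤ (n : ℤ) + e := by omega
    obtain ⟨k, hk⟩ : ∃ k : ℕ, (k : ℤ) = (n : ℤ) + e := ⟨((n : ℤ) + e).toNat, by omega⟩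
    have hkk : ((n : ℤ) + e).toNat = k := by omega
    have h3 : (1 : ℂ) - (u ^ 2) ^ (k + 1) ≠ 0 := one_sub_pow_succ_ne_zero hq k
    have h4 : (1 : ℂ) - (u ^ 2) ^ (n + 1) ≠ 0 := one_sub_pow_succ_ne_zero hq n
    have A1 : tetTerm u m (e + 1) n * (1 - (u ^ 2) ^ (k + 1)) * u ^ m = tetTerm u m e n := by
      have h5 := tet_e_up hu hu1 m e n h
      rw [hkk] at h5
      calc tetTerm u m (e + 1) n * (1 - (u ^ 2) ^ (k + 1)) * u ^ m
          = (u ^ (-m) * tetTerm u m e n) * u ^ m := by rw [h5]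
        _ = (u ^ (-m) * u ^ m) * tetTerm u m e n := by ring
        _ = tetTerm u m e n := by
            rw [← czpow_add hu, neg_add_cancel, zpow_zero, one_mul]
    have A2 : tetTerm u m (e - 1) n
        = u ^ m * (1 - (u ^ 2) ^ k) * tetTerm u m e n := by
      have h5 := tet_e_down hu hu1 m e n h
      rwa [hkk] at h5
    have A3 : tetTerm u m e (n + 1) * ((1 - (u ^ 2) ^ (n + 1)) * (1 - (u ^ 2) ^ (k + 1)))
          * (u ^ m * u ^ m) = -((u ^ 2) ^ (n + 1)) * tetTerm u m e n := by
      have h5 := tet_n_up hu hu1 m e n h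
      rw [hkk] at h5
      calc tetTerm u m e (n + 1) * ((1 - (u ^ 2) ^ (n + 1)) * (1 - (u ^ 2) ^ (k + 1)))
            * (u ^ m * u ^ m)
          = (-(u ^ (2 * (n:ℤ) + 2 - 2 * m)) * tetTerm u m e n) * (u ^ m * u ^ m) := by rw [h5]
        _ = -((u ^ (2 * (n:ℤ) + 2 - 2 * m) * u ^ m * u ^ m)) * tetTerm u m e n := by ring
        _ = -((u ^ 2) ^ (n + 1)) * tetTerm u m e n := by
            rw [← czpow_add hu, ← czpow_add hu,
              show (2 * (n:ℤ) + 2 - 2 * m + m + m) = 2 * ((n + 1 : ℕ) : ℤ) by push_cast; ring,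
              ← hpow u (n + 1)]
    have cu : (u ^ (2 * e + m) - u ^ (-m) - u ^ m) * u ^ m
        = u ^ (2 * e + m + m) - 1 - u ^ (m + m) := by
      rw [sub_mul, sub_mul, ← czpow_add hu (2 * e + m) m, ← czpow_add hu (-m) m,
        ← czpow_add hu m m, neg_add_cancel, zpow_zero]
    rw [tetS, tetS]
    apply mul_right_cancel₀ (mul_ne_zero (mul_ne_zero hm hm) h3)
    simp only [hpow] at A1 A2 A3 cu ⊢
    push_cast at A1 A2 A3 cu ⊢
    simp only [hk] at A1 A2 A3 cu ⊢
    simp only [two_mul] at A1 A2 A3 cu ⊢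
    simp only [czpow_add hu, czpow_neg, czpow_one] at A1 A2 A3 cu ⊢
    linear_combination (u ^ m) * A1
      + (tetTerm u m e n * u ^ m * (1 - u ^ (n:ℤ) * u ^ (n:ℤ) * u ^ e * u ^ e * u * u)) * cu
      + (u ^ m * u ^ m * (1 - u ^ (n:ℤ) * u ^ (n:ℤ) * u ^ e * u ^ e * u * u)) * A2
      + (u ^ m * u ^ e * u ^ e) * A3

open Filter Topology

lemma summable_tetTerm (u : ℂ) (hu0 : 0 < ‖u‖) (hu1 : ‖u‖ < 1) (m e : ℤ) :
    Summable (tetTerm u m e) := by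
  have hu : u ≠ 0 := norm_pos_iff.mp hu0
  have hq : ‖u ^ 2‖ < 1 := qq_norm_lt hu1
  have hq0 : 0 ≤ ‖u ^ 2‖ := norm_nonneg _
  have hC : 0 < 1 - ‖u ^ 2‖ := by linarith
  apply summable_of_ratio_norm_eventually_le (r := 1 / 2) (by norm_num)
  have hten : Tendsto (fun n : ℕ => ‖u‖ ^ (2 * (n : ℤ) + 2 - 2 * m)) atTop (𝓝 0) := by
    have heq : (fun n : ℕ => ‖u‖ ^ (2 * (n : ℤ) + 2 - 2 * m))
        = fun n : ℕ => (‖u‖ ^ 2) ^ n * ‖u‖ ^ (2 - 2 * m) := by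
      funext n
      rw [show (2 * (n : ℤ) + 2 - 2 * m) = 2 * (n : ℤ) + (2 - 2 * m) by ring,
        zpow_add₀ (ne_of_gt hu0), show (2 * (n : ℤ)) = ((2 * n : ℕ) : ℤ) by push_cast; ring,
        zpow_natCast, pow_mul]
    rw [heq]
    have h2 : Tendsto (fun n : ℕ => (‖u‖ ^ 2) ^ n) atTop (𝓝 0) :=
      tendsto_pow_atTop_nhds_zero_of_lt_one (sq_nonneg _) (by nlinarith [norm_nonneg u])
    simpa using h2.mul_const (‖u‖ ^ (2 - 2 * m))
  have hev1 : ∀ᶠ n : ℕ in atTop, ‖u‖ ^ (2 * (n : ℤ) + 2 - 2 * m) < (1 - ‖u ^ 2‖) ^ 2 / 2 :=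
    hten.eventually_lt_const (by positivity)
  have hev2 : ∀ᶠ n : ℕ in atTop, 0 ≤ (n : ℤ) + e :=
    eventually_atTop.2 ⟨(-e).toNat, fun n hn => by omega⟩
  filter_upwards [hev1, hev2] with n hn1 hn2
  have h5 := tet_n_up hu hu1 m e n hn2
  have hnorm : ‖tetTerm u m e (n + 1)‖
        * (‖(1 : ℂ) - (u ^ 2) ^ (n + 1)‖ * ‖(1 : ℂ) - (u ^ 2) ^ (((n : ℤ) + e).toNat + 1)‖)
      = ‖u ^ (2 * (n : ℤ) + 2 - 2 * m)‖ * ‖tetTerm u m e n‖ := by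
    rw [← norm_mul, ← norm_mul, h5, norm_mul, norm_neg]
  have w1 := norm_one_sub_pow_succ_ge hq n
  have w2 := norm_one_sub_pow_succ_ge hq (((n : ℤ) + e).toNat)
  have hw : ‖u ^ (2 * (n : ℤ) + 2 - 2 * m)‖ < (1 - ‖u ^ 2‖) ^ 2 / 2 := by
    rw [norm_zpow]; exact hn1
  have hab : (1 - ‖u ^ 2‖) * (1 - ‖u ^ 2‖)
      ≤ ‖(1 : ℂ) - (u ^ 2) ^ (n + 1)‖ * ‖(1 : ℂ) - (u ^ 2) ^ (((n : ℤ) + e).toNat + 1)‖ :=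
    mul_le_mul w1 w2 hC.le (norm_nonneg _)
  have h1 : ‖tetTerm u m e (n + 1)‖ * ((1 - ‖u ^ 2‖) * (1 - ‖u ^ 2‖))
      ≤ ‖u ^ (2 * (n : ℤ) + 2 - 2 * m)‖ * ‖tetTerm u m e n‖ := by
    rw [← hnorm]
    exact mul_le_mul_of_nonneg_left hab (norm_nonneg _)
  have h2 : ‖u ^ (2 * (n : ℤ) + 2 - 2 * m)‖ * ‖tetTerm u m e n‖
      ≤ ((1 - ‖u ^ 2‖) ^ 2 / 2) * ‖tetTerm u m e n‖ :=
    mul_le_mul_of_nonneg_right hw.le (norm_nonneg _)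
  nlinarith [norm_nonneg (tetTerm u m e (n + 1)), norm_nonneg (tetTerm u m e n), mul_pos hC hC, h1, h2]

lemma tendsto_tetS (u : ℂ) (hu0 : 0 < ‖u‖) (hu1 : ‖u‖ < 1) (m e : ℤ) :
    Tendsto (tetS u m e) atTop (𝓝 0) := by
  have h0 : Tendsto (tetTerm u m e) atTop (𝓝 0) :=
    (summable_tetTerm u hu0 hu1 m e).tendsto_atTop_zero
  have hqn : Tendsto (fun n : ℕ => ((u ^ 2) ^ n : ℂ)) atTop (𝓝 0) :=
    tendsto_pow_atTop_nhds_zero_of_norm_lt_one (qq_norm_lt hu1)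
  have := ((tendsto_const_nhds (x := (u ^ (m + 2 * e) : ℂ))).mul
    ((tendsto_const_nhds (x := (1 : ℂ))).sub hqn)).mul h0
  rw [show tetS u m e = fun n => u ^ (m + 2 * e) * (1 - (u ^ 2) ^ n) * tetTerm u m e n from rfl]
  simpa using this


/-- three-term recurrence in `e`:
`I_Δ(m,e+1) + (q^{e+m/2} - q^{-m/2} - q^{m/2}) I_Δ(m,e) + I_Δ(m,e-1) = 0`, `u = q^{1/2}`. -/
theorem stmt_5 (u : ℂ) (hu0 : 0 < ‖u‖) (hu1 : ‖u‖ < 1) (m e : ℤ) :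
    tetIndex u m (e + 1) + (u ^ (2 * e + m) - u ^ (-m) - u ^ m) * tetIndex u m e +
      tetIndex u m (e - 1) = 0 := by
  have hu : u ≠ 0 := norm_pos_iff.mp hu0
  have s1 : Summable (tetTerm u m (e + 1)) := summable_tetTerm u hu0 hu1 m (e + 1)
  have s0 : Summable (tetTerm u m e) := summable_tetTerm u hu0 hu1 m e
  have s2 : Summable (tetTerm u m (e - 1)) := summable_tetTerm u hu0 hu1 m (e - 1)
  have s0c : Summable (fun n => (u ^ (2 * e + m) - u ^ (-m) - u ^ m) * tetTerm u m e n) :=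
    s0.mul_left _
  have sF : Summable (fun n => tetTerm u m (e + 1) n
      + (u ^ (2 * e + m) - u ^ (-m) - u ^ m) * tetTerm u m e n + tetTerm u m (e - 1) n) :=
    (s1.add s0c).add s2
  have hS0 : tetS u m e 0 = 0 := by simp [tetS]
  have hps : Tendsto (fun N => ∑ i ∈ Finset.range N, (tetTerm u m (e + 1) i
      + (u ^ (2 * e + m) - u ^ (-m) - u ^ m) * tetTerm u m e i + tetTerm u m (e - 1) i))
      atTop (𝓝 0) := by
    have heq : (fun N => ∑ i ∈ Finset.range N, (tetTerm u m (e + 1) i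
        + (u ^ (2 * e + m) - u ^ (-m) - u ^ m) * tetTerm u m e i + tetTerm u m (e - 1) i))
        = fun N => tetS u m e 0 - tetS u m e N := by
      funext N
      rw [Finset.sum_congr rfl (fun i _ => tet_key u hu hu1 m e i), Finset.sum_range_sub']
    rw [heq, hS0]
    simpa using (tendsto_const_nhds (x := (0:ℂ))).sub (tendsto_tetS u hu0 hu1 m e)
  have htsum : (∑' n : ℕ, (tetTerm u m (e + 1) n
      + (u ^ (2 * e + m) - u ^ (-m) - u ^ m) * tetTerm u m e n + tetTerm u m (e - 1) n)) = 0 :=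
    tendsto_nhds_unique sF.hasSum.tendsto_sum_nat hps
  rw [tetIndex, tetIndex, tetIndex, ← tsum_mul_left, ← Summable.tsum_add s1 s0c,
    ← Summable.tsum_add (s1.add s0c) s2]
  exact htsum
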